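/- Define φ_0(σ) = (√3/π)·2cosh(σ)/(1+2cosh(2σ)) (as a meromorphic function of complex σ). Then for all θ∈C with θ ≠ ±inπ/3 for every integer n, φ_0(θ + iπ/3) + φ_0(θ − iπ/3) − φ_0(θ) = 0. -/

import Mathlib

set_option maxHeartbeats 2000000

open Complex

noncomputable def φ₀ (σ : ℂ) : ℂ :=
  ((Real.sqrt 3 / Real.pi : ℝ) : ℂ) * (2 * Complex.cosh σ) / (1 + 2 * Complex.cosh (2 * σ))

/-- The kernel `φ₀` solves the homogeneous shift equation away from its poles. -/
theorem phi0_shift_equation (θ : ℂ)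
    (hθ : ∀ n : ℤ, θ ≠ (n : ℂ) * (Real.pi : ℂ) / 3 * I ∧
      θ ≠ -((n : ℂ) * (Real.pi : ℂ) / 3 * I)) :
    φ₀ (θ + (Real.pi : ℂ) * I / 3) + φ₀ (θ - (Real.pi : ℂ) * I / 3) - φ₀ θ = 0 := by
  set s : ℂ := (Real.pi : ℂ) * I / 3 with hs
  set a : ℂ := Complex.exp θ with ha
  set c : ℂ := Complex.exp s with hc
  have ha0 : a ≠ 0 := Complex.exp_ne_zero θ
  have hc0 : c ≠ 0 := Complex.exp_ne_zero s
  -- the key algebraic relation satisfied by c = exp(iπ/3)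
  have hc2 : c ^ 2 = c - 1 := by
    have h3 : ((Real.sqrt 3 : ℝ) : ℂ) ^ 2 = 3 := by
      rw [show ((Real.sqrt 3 : ℝ) : ℂ) ^ 2 = ((Real.sqrt 3 ^ 2 : ℝ) : ℂ) by push_cast; ring,
        Real.sq_sqrt (by norm_num : (3:ℝ) ≥ 0)]; norm_num
    have hcv : c = (1/2 : ℂ) + ((Real.sqrt 3 : ℝ) : ℂ) / 2 * I := by
      rw [hc, hs, show (Real.pi : ℂ) * I / 3 = ((Real.pi / 3 : ℝ) : ℂ) * I by push_cast; ring,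
        Complex.exp_mul_I, ← Complex.ofReal_cos, ← Complex.ofReal_sin,
        Real.cos_pi_div_three, Real.sin_pi_div_three]
      push_cast; ring
    rw [hcv]
    linear_combination (-1/4 : ℂ) * h3 + ((Real.sqrt 3 : ℝ) : ℂ) ^ 2 / 4 * Complex.I_sq
  -- exp(6θ) ≠ 1
  have h6 : Complex.exp (6 * θ) ≠ 1 := by
    intro h1
    rw [Complex.exp_eq_one_iff] at h1
    obtain ⟨n, hn⟩ := h1
    exact (hθ n).1 (by linear_combination hn / 6)
  -- denominators are nonzero
  have hD : ∀ σ : ℂ, Complex.exp (6 * σ) ≠ 1 → 1 + 2 * Complex.cosh (2 * σ) ≠ 0 := by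
    intro σ h h0
    apply h
    set x : ℂ := Complex.exp (2 * σ) with hx
    have hx0 : x ≠ 0 := Complex.exp_ne_zero _
    have h2 : x ^ 2 + x + 1 = 0 := by
      have hco : Complex.cosh (2 * σ) = (x + x⁻¹) / 2 := by
        rw [Complex.cosh, Complex.exp_neg]
      rw [hco] at h0
      field_simp at h0
      linear_combination h0
    have h3 : Complex.exp (6 * σ) = x ^ 3 := by
      rw [hx, show (6:ℂ) * σ = 2 * σ + 2 * σ + 2 * σ by ring, Complex.exp_add,
        Complex.exp_add]; ring
    rw [h3]
    linear_combination (x - 1) * h2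
  have hD0 := hD θ h6
  have hD1 : 1 + 2 * Complex.cosh (2 * (θ + s)) ≠ 0 := by
    refine hD (θ + s) ?_
    rw [show 6 * (θ + s) = 6 * θ + 2 * (Real.pi : ℂ) * I by rw [hs]; ring, Complex.exp_add,
      Complex.exp_two_pi_mul_I, mul_one]
    exact h6
  have hD2 : 1 + 2 * Complex.cosh (2 * (θ - s)) ≠ 0 := by
    refine hD (θ - s) ?_
    rw [show 6 * (θ - s) = 6 * θ - 2 * (Real.pi : ℂ) * I by rw [hs]; ring, Complex.exp_sub,
      Complex.exp_two_pi_mul_I, div_one]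
    exact h6
  -- rewrite all the exponentials
  have e1 : Complex.exp (θ + s) = a * c := Complex.exp_add θ s
  have e2 : Complex.exp (-(θ + s)) = (a * c)⁻¹ := by rw [Complex.exp_neg, e1]
  have e3 : Complex.exp (2 * (θ + s)) = (a * c) * (a * c) := by
    rw [two_mul, Complex.exp_add, e1]
  have e4 : Complex.exp (-(2 * (θ + s))) = ((a * c) * (a * c))⁻¹ := by
    rw [Complex.exp_neg, e3]
  have f1 : Complex.exp (θ - s) = a / c := Complex.exp_sub θ s
  have f2 : Complex.exp (-(θ - s)) = (a / c)⁻¹ := by rw [Complex.exp_neg, f1]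
  have f3 : Complex.exp (2 * (θ - s)) = (a / c) * (a / c) := by
    rw [two_mul, Complex.exp_add, f1]
  have f4 : Complex.exp (-(2 * (θ - s))) = ((a / c) * (a / c))⁻¹ := by
    rw [Complex.exp_neg, f3]
  have g1 : Complex.exp (2 * θ) = a * a := by rw [two_mul, Complex.exp_add]
  have g2 : Complex.exp (-(2 * θ)) = (a * a)⁻¹ := by rw [Complex.exp_neg, g1]
  have g3 : Complex.exp (-θ) = a⁻¹ := by rw [Complex.exp_neg]
  unfold φ₀
  simp only [Complex.cosh] at hD0 hD1 hD2 ⊢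
  rw [g1, g2] at hD0
  rw [e3, e4] at hD1
  rw [f3, f4] at hD2
  rw [e1, e2, e3, e4, f1, f2, f3, f4, g1, g2, g3]
  have hπ : (Real.pi : ℂ) ≠ 0 := Complex.ofReal_ne_zero.mpr Real.pi_ne_zero
  have hc3 : c ^ 3 = -1 := by linear_combination (c + 1) * hc2
  have hc6 : c ^ 6 = 1 := by linear_combination (c ^ 3 - 1) * hc3
  have ha6 : a ^ 6 ≠ 1 := by
    have : a ^ 6 = Complex.exp (6 * θ) := by
      rw [ha, show (6:ℂ) * θ = θ + θ + θ + θ + θ + θ by ring, Complex.exp_add,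
        Complex.exp_add, Complex.exp_add, Complex.exp_add, Complex.exp_add]; ring
    rw [this]; exact h6
  have cube : ∀ X : ℂ, X ^ 3 ≠ 1 → X * 2 + 2 * (X * X + 1) ≠ 0 := by
    intro X h3 h0
    exact h3 (by linear_combination (X - 1) / 2 * h0)
  have hn1 : a * c * (a * c) * 2 + 2 * (a * c * (a * c) * (a * c * (a * c)) + 1) ≠ 0 := by
    refine cube _ ?_
    intro h; apply ha6; linear_combination h - a ^ 6 * hc6
  have hn3 : a * a * 2 + 2 * (a * a * (a * a) + 1) ≠ 0 := by
    refine cube _ ?_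
    intro h; exact ha6 (by linear_combination h)
  have hn2 : c * c * (a * a) * 2 + 2 * (a * a * (a * a) + c * c * (c * c)) ≠ 0 := by
    intro h0
    apply ha6
    have hd : a ^ 6 - c ^ 6 = 0 := by linear_combination (a * a - c * c) / 2 * h0
    linear_combination hd + hc6
  field_simp
  have hA : (Real.pi : ℂ) * (a * c * 2) *
      (a * c * (a * c) * 2 + 2 * (a * c * (a * c) * (a * c * (a * c)) + 1)) ≠ 0 :=
    mul_ne_zero (mul_ne_zero hπ (by simp [ha0, hc0])) hn1
  have hB : (Real.pi : ℂ) * (c * a * 2) *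
      (c * c * (a * a) * 2 + 2 * (a * a * (a * a) + c * c * (c * c))) ≠ 0 :=
    mul_ne_zero (mul_ne_zero hπ (by simp [ha0, hc0])) hn2
  simp only [← ha]
  have hD1' : a^2*c^2 + (a^4*c^4+1) ≠ 0 := by intro h; apply hn1; linear_combination 2*h
  have hD2' : a^2*c^2 + (a^4+c^4) ≠ 0 := by intro h; apply hn2; linear_combination 2*h
  have hD3' : a^2 + (a^4+1) ≠ 0 := by intro h; apply hn3; linear_combination 2*h
  rw [mul_eq_zero]; right
  rw [div_add_div _ _ hD1' hD2', mul_div_assoc', div_sub_div _ _ (mul_ne_zero hD1' hD2') hD3',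
    div_eq_zero_iff]; left
  linear_combination ((1:ℂ)*a^0*c^3 + (1:ℂ)*a^2*c^1 + (1:ℂ)*a^2*c^3 + (1:ℂ)*a^2*c^5 + (-1:ℂ)*a^4*c^0 + (1:ℂ)*a^4*c^1 + (1:ℂ)*a^4*c^2 + (3:ℂ)*a^4*c^3 + (1:ℂ)*a^4*c^4 + (1:ℂ)*a^4*c^5 + (-1:ℂ)*a^4*c^6 + (-1:ℂ)*a^6*c^0 + (1:ℂ)*a^6*c^1 + (1:ℂ)*a^6*c^2 + (3:ℂ)*a^6*c^3 + (1:ℂ)*a^6*c^4 + (1:ℂ)*a^6*c^5 + (-1:ℂ)*a^6*c^6 + (1:ℂ)*a^8*c^1 + (1:ℂ)*a^8*c^3 + (1:ℂ)*a^8*c^5 + (1:ℂ)*a^10*c^3) * hc2
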